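/- For every natural number n ≥ 2, the function f(s) = (1 − e^{−6ns/(n+3)})/((1 − e^{−3ns/(n+3)})²·(1 − e^{−2ns/(n+3)})·(1 − e^{−6s/(n+3)})), defined for s > 0, has Hilbert-series Laurent coefficients (a₀, a₁) of order 3 at s = 0 with a₀ = a₁ = (n+3)³/(18n²). -/

import Mathlib

open Filter Real Set

/-- `f` has Hilbert-series Laurent coefficients `(a₀, a₁)` of order `n` at `s = 0`:
`sⁿ·f(s) → a₀` and `sⁿ⁻¹·(f(s) − a₀/sⁿ) → a₁` as `s → 0⁺`. -/
def HSLaurentCoeffs (f : ℝ → ℝ) (n : ℕ) (a₀ a₁ : ℝ) : Prop :=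
  Filter.Tendsto (fun s => s ^ n * f s) (nhdsWithin 0 (Set.Ioi 0)) (nhds a₀) ∧
  Filter.Tendsto (fun s => s ^ (n - 1) * (f s - a₀ / s ^ n))
    (nhdsWithin 0 (Set.Ioi 0)) (nhds a₁)

lemma hasDerivAt_one_sub_exp (k x : ℝ) :
    HasDerivAt (fun s : ℝ => 1 - Real.exp (-(k * s))) (k * Real.exp (-(k * x))) x := by
  have h1 : HasDerivAt (fun s : ℝ => -(k * s)) (-k) x := by
    simpa using ((hasDerivAt_id x).const_mul k).fun_neg
  have h2 : HasDerivAt (fun s : ℝ => Real.exp (-(k * s))) (Real.exp (-(k * x)) * (-k)) x :=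
    h1.exp
  have h3 := (hasDerivAt_const x (1 : ℝ)).sub h2
  simpa [mul_comm] using (hasDerivAt_const x (1 : ℝ)).fun_sub h2

lemma tendsto_u (k : ℝ) :
    Tendsto (fun s : ℝ => (1 - Real.exp (-(k * s))) / s) (nhdsWithin 0 (Set.Ioi 0)) (nhds k) := by
  have hd : HasDerivAt (fun s : ℝ => 1 - Real.exp (-(k * s))) k 0 := by
    simpa using hasDerivAt_one_sub_exp k 0
  have hsl := hasDerivAt_iff_tendsto_slope.mp hd
  have hmono : nhdsWithin (0:ℝ) (Set.Ioi 0) ≤ nhdsWithin (0:ℝ) {(0:ℝ)}ᶜ :=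
    nhdsWithin_mono 0 (fun x hx => ne_of_gt hx)
  refine (hsl.mono_left hmono).congr (fun s => ?_)
  simp [slope_def_field]

lemma tendsto_w (k : ℝ) :
    Tendsto (fun s : ℝ => (1 - Real.exp (-(k * s)) - k * s) / s ^ 2)
      (nhdsWithin 0 (Set.Ioi 0)) (nhds (-(k ^ 2) / 2)) := by
  have key := HasDerivAt.lhopital_zero_right_on_Ioo (a := (0:ℝ)) (b := 1)
    (f := fun s => 1 - Real.exp (-(k * s)) - k * s)
    (f' := fun s => k * Real.exp (-(k * s)) - k)
    (g := fun s => s ^ 2) (g' := fun s => 2 * s) (l := nhds (-(k ^ 2) / 2))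
    one_pos
    (fun x _ => (hasDerivAt_one_sub_exp k x).sub (by simpa using (hasDerivAt_id x).const_mul k))
    (fun x _ => by simpa using hasDerivAt_pow 2 x)
    (fun x hx => by have := hx.1; positivity)
    ?_ ?_ ?_
  · exact key
  · have : Continuous fun s : ℝ => 1 - Real.exp (-(k * s)) - k * s := by fun_prop
    have h0 := this.tendsto 0
    simp only [mul_zero, neg_zero, Real.exp_zero, sub_self, sub_zero] at h0
    exact h0.mono_left nhdsWithin_le_nhds
  · have : Tendsto (fun s : ℝ => s ^ 2) (nhds 0) (nhds ((0:ℝ) ^ 2)) :=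
      (continuous_pow 2).tendsto 0
    simpa using this.mono_left nhdsWithin_le_nhds
  · -- (k·exp(−ks) − k)/(2s) → −k²/2
    have h1 : Tendsto (fun s : ℝ => -(k / 2) * ((1 - Real.exp (-(k * s))) / s))
        (nhdsWithin 0 (Set.Ioi 0)) (nhds (-(k / 2) * k)) := (tendsto_u k).const_mul _
    have h2 : -(k / 2) * k = -(k ^ 2) / 2 := by ring
    rw [h2] at h1
    refine h1.congr' ?_
    filter_upwards [self_mem_nhdsWithin] with s hs
    have hs0 : s ≠ 0 := ne_of_gt hs
    field_simp
    ring

lemma one_sub_exp_ne {k s : ℝ} (hk : 0 < k) (hs : 0 < s) : 1 - Real.exp (-(k * s)) ≠ 0 := by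
  have : Real.exp (-(k * s)) < 1 := by
    rw [Real.exp_lt_one_iff]
    have : 0 < k * s := mul_pos hk hs
    linarith
  exact (sub_pos.mpr this).ne'

set_option maxHeartbeats 2000000 in
lemma hs_aux (A B C D a₀ : ℝ) (hApos : 0 < A) (hBpos : 0 < B) (hCpos : 0 < C) (hDpos : 0 < D)
    (hA : A = a₀ * (B ^ 2 * C * D)) (h2 : 2 * B + C + D - A = 2) :
    HSLaurentCoeffs
      (fun s => (1 - Real.exp (-(A * s)))
        / ((1 - Real.exp (-(B * s))) ^ 2 * (1 - Real.exp (-(C * s)))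
           * (1 - Real.exp (-(D * s))))) 3 a₀ a₀ := by
  subst hA
  set a₀' := a₀ with ha₀'
  have hBCD : (0:ℝ) < B ^ 2 * C * D := by positivity
  have hA' : 0 < a₀ := by
    have := hApos
    nlinarith
  have hsid : Tendsto (fun s : ℝ => s) (nhdsWithin 0 (Set.Ioi 0)) (nhds 0) :=
    tendsto_id.mono_right nhdsWithin_le_nhds
  constructor
  · -- first limit
    have h4 : Tendsto (fun s : ℝ =>
        ((1 - Real.exp (-(a₀ * (B ^ 2 * C * D) * s))) / s,
         ((1 - Real.exp (-(B * s))) / s,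
          ((1 - Real.exp (-(C * s))) / s, (1 - Real.exp (-(D * s))) / s))))
        (nhdsWithin 0 (Set.Ioi 0)) (nhds (a₀ * (B ^ 2 * C * D), (B, (C, D)))) :=
      (tendsto_u _).prodMk_nhds ((tendsto_u _).prodMk_nhds ((tendsto_u _).prodMk_nhds (tendsto_u _)))
    have hc : ContinuousAt (fun p : ℝ × ℝ × ℝ × ℝ => p.1 / (p.2.1 ^ 2 * p.2.2.1 * p.2.2.2))
        (a₀ * (B ^ 2 * C * D), (B, (C, D))) := by
      apply ContinuousAt.div
      · fun_prop
      · fun_prop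
      · show B ^ 2 * C * D ≠ 0
        positivity
    have key := hc.tendsto.comp h4
    have hval : a₀ * (B ^ 2 * C * D) / (B ^ 2 * C * D) = a₀ :=
      mul_div_cancel_right₀ _ hBCD.ne'
    rw [show (a₀ * (B ^ 2 * C * D), (B, (C, D))).1 /
        ((a₀ * (B ^ 2 * C * D), (B, (C, D))).2.1 ^ 2 *
          (a₀ * (B ^ 2 * C * D), (B, (C, D))).2.2.1 *
          (a₀ * (B ^ 2 * C * D), (B, (C, D))).2.2.2) = a₀ from hval] at key
    refine key.congr' ?_
    filter_upwards [self_mem_nhdsWithin] with s hs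
    have hs0 : s ≠ 0 := ne_of_gt hs
    have h1 := one_sub_exp_ne hApos hs
    have h2' := one_sub_exp_ne hBpos hs
    have h3' := one_sub_exp_ne hCpos hs
    have h4' := one_sub_exp_ne hDpos hs
    show _ = s ^ 3 * _
    simp only [Function.comp_apply, ha₀']
    field_simp
  · -- second limit
    have h8 : Tendsto (fun s : ℝ =>
        ((1 - Real.exp (-(a₀ * (B ^ 2 * C * D) * s)) - a₀ * (B ^ 2 * C * D) * s) / s ^ 2,
         (s,
          ((1 - Real.exp (-(B * s)) - B * s) / s ^ 2,
           ((1 - Real.exp (-(C * s)) - C * s) / s ^ 2,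
            ((1 - Real.exp (-(D * s)) - D * s) / s ^ 2,
             ((1 - Real.exp (-(B * s))) / s,
              ((1 - Real.exp (-(C * s))) / s, (1 - Real.exp (-(D * s))) / s))))))))
        (nhdsWithin 0 (Set.Ioi 0))
        (nhds (-((a₀ * (B ^ 2 * C * D)) ^ 2) / 2,
          (0, (-(B ^ 2) / 2, (-(C ^ 2) / 2, (-(D ^ 2) / 2, (B, (C, D)))))))) :=
      (tendsto_w _).prodMk_nhds (hsid.prodMk_nhds ((tendsto_w _).prodMk_nhds
        ((tendsto_w _).prodMk_nhds ((tendsto_w _).prodMk_nhds ((tendsto_u _).prodMk_nhds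
          ((tendsto_u _).prodMk_nhds (tendsto_u _)))))))
    have hc2 : ContinuousAt (fun p : ℝ × ℝ × ℝ × ℝ × ℝ × ℝ × ℝ × ℝ =>
        (p.1 - a₀ * (B ^ 2 * (C * p.2.2.2.2.1 + D * p.2.2.2.1) + 2 * B * C * D * p.2.2.1
          + p.2.1 * (B ^ 2 * p.2.2.2.1 * p.2.2.2.2.1
              + 2 * B * p.2.2.1 * (C * p.2.2.2.2.1 + D * p.2.2.2.1) + p.2.2.1 ^ 2 * C * D)
          + p.2.1 ^ 2 * (2 * B * p.2.2.1 * p.2.2.2.1 * p.2.2.2.2.1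
              + p.2.2.1 ^ 2 * (C * p.2.2.2.2.1 + D * p.2.2.2.1))
          + p.2.1 ^ 3 * p.2.2.1 ^ 2 * p.2.2.2.1 * p.2.2.2.2.1))
        / (p.2.2.2.2.2.1 ^ 2 * p.2.2.2.2.2.2.1 * p.2.2.2.2.2.2.2))
        (-((a₀ * (B ^ 2 * C * D)) ^ 2) / 2,
          (0, (-(B ^ 2) / 2, (-(C ^ 2) / 2, (-(D ^ 2) / 2, (B, (C, D))))))) := by
      apply ContinuousAt.div
      · fun_prop
      · fun_prop
      · show B ^ 2 * C * D ≠ 0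
        positivity
    have key2 : Tendsto (fun s : ℝ =>
        ((1 - Real.exp (-(a₀ * (B ^ 2 * C * D) * s)) - a₀ * (B ^ 2 * C * D) * s) / s ^ 2
          - a₀ * (B ^ 2 * (C * ((1 - Real.exp (-(D * s)) - D * s) / s ^ 2)
                + D * ((1 - Real.exp (-(C * s)) - C * s) / s ^ 2))
            + 2 * B * C * D * ((1 - Real.exp (-(B * s)) - B * s) / s ^ 2)
            + s * (B ^ 2 * ((1 - Real.exp (-(C * s)) - C * s) / s ^ 2)
                  * ((1 - Real.exp (-(D * s)) - D * s) / s ^ 2)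
                + 2 * B * ((1 - Real.exp (-(B * s)) - B * s) / s ^ 2)
                  * (C * ((1 - Real.exp (-(D * s)) - D * s) / s ^ 2)
                    + D * ((1 - Real.exp (-(C * s)) - C * s) / s ^ 2))
                + ((1 - Real.exp (-(B * s)) - B * s) / s ^ 2) ^ 2 * C * D)
            + s ^ 2 * (2 * B * ((1 - Real.exp (-(B * s)) - B * s) / s ^ 2)
                  * ((1 - Real.exp (-(C * s)) - C * s) / s ^ 2)
                  * ((1 - Real.exp (-(D * s)) - D * s) / s ^ 2)
                + ((1 - Real.exp (-(B * s)) - B * s) / s ^ 2) ^ 2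
                  * (C * ((1 - Real.exp (-(D * s)) - D * s) / s ^ 2)
                    + D * ((1 - Real.exp (-(C * s)) - C * s) / s ^ 2)))
            + s ^ 3 * ((1 - Real.exp (-(B * s)) - B * s) / s ^ 2) ^ 2
                * ((1 - Real.exp (-(C * s)) - C * s) / s ^ 2)
                * ((1 - Real.exp (-(D * s)) - D * s) / s ^ 2)))
        / (((1 - Real.exp (-(B * s))) / s) ^ 2 * ((1 - Real.exp (-(C * s))) / s)
            * ((1 - Real.exp (-(D * s))) / s)))
        (nhdsWithin 0 (Set.Ioi 0))
        (nhds ((-((a₀ * (B ^ 2 * C * D)) ^ 2) / 2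
        - a₀ * (B ^ 2 * (C * (-(D ^ 2) / 2) + D * (-(C ^ 2) / 2)) + 2 * B * C * D * (-(B ^ 2) / 2)
          + 0 * (B ^ 2 * (-(C ^ 2) / 2) * (-(D ^ 2) / 2)
              + 2 * B * (-(B ^ 2) / 2) * (C * (-(D ^ 2) / 2) + D * (-(C ^ 2) / 2))
              + (-(B ^ 2) / 2) ^ 2 * C * D)
          + 0 ^ 2 * (2 * B * (-(B ^ 2) / 2) * (-(C ^ 2) / 2) * (-(D ^ 2) / 2)
              + (-(B ^ 2) / 2) ^ 2 * (C * (-(D ^ 2) / 2) + D * (-(C ^ 2) / 2)))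
          + 0 ^ 3 * (-(B ^ 2) / 2) ^ 2 * (-(C ^ 2) / 2) * (-(D ^ 2) / 2)))
        / (B ^ 2 * C * D))) := hc2.tendsto.comp h8
    have hval2 : (-((a₀ * (B ^ 2 * C * D)) ^ 2) / 2
        - a₀ * (B ^ 2 * (C * (-(D ^ 2) / 2) + D * (-(C ^ 2) / 2)) + 2 * B * C * D * (-(B ^ 2) / 2)
          + 0 * (B ^ 2 * (-(C ^ 2) / 2) * (-(D ^ 2) / 2)
              + 2 * B * (-(B ^ 2) / 2) * (C * (-(D ^ 2) / 2) + D * (-(C ^ 2) / 2))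
              + (-(B ^ 2) / 2) ^ 2 * C * D)
          + 0 ^ 2 * (2 * B * (-(B ^ 2) / 2) * (-(C ^ 2) / 2) * (-(D ^ 2) / 2)
              + (-(B ^ 2) / 2) ^ 2 * (C * (-(D ^ 2) / 2) + D * (-(C ^ 2) / 2)))
          + 0 ^ 3 * (-(B ^ 2) / 2) ^ 2 * (-(C ^ 2) / 2) * (-(D ^ 2) / 2)))
        / (B ^ 2 * C * D) = a₀ := by
      rw [div_eq_iff hBCD.ne']
      linear_combination (a₀ * (B ^ 2 * C * D) / 2) * h2
    rw [hval2] at key2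
    refine key2.congr' ?_
    filter_upwards [self_mem_nhdsWithin] with s hs
    have hs0 : s ≠ 0 := ne_of_gt hs
    have h1 := one_sub_exp_ne hApos hs
    have h2' := one_sub_exp_ne hBpos hs
    have h3' := one_sub_exp_ne hCpos hs
    have h4' := one_sub_exp_ne hDpos hs
    show _ = s ^ (3 - 1) * _
    norm_num
    simp only [Function.comp_apply, ha₀']
    field_simp
    ring

/-- The Hilbert series of the threefold `w² + x² + y³ + zⁿ = 0` (`n ≥ 2`; the E₆ threefold
for `n = 4`, E₈ for `n = 5`) has Laurent coefficients `a₀ = a₁ = (n+3)³/(18n²)` of order 3. -/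
theorem E68_type_threefold_hs_coeffs (n : ℕ) (hn : 2 ≤ n) :
    HSLaurentCoeffs
      (fun s => (1 - Real.exp (-(6 * (n : ℝ) * s / ((n : ℝ) + 3))))
        / ((1 - Real.exp (-(3 * (n : ℝ) * s / ((n : ℝ) + 3)))) ^ 2
           * (1 - Real.exp (-(2 * (n : ℝ) * s / ((n : ℝ) + 3))))
           * (1 - Real.exp (-(6 * s / ((n : ℝ) + 3))))))
      3 (((n : ℝ) + 3) ^ 3 / (18 * (n : ℝ) ^ 2))
        (((n : ℝ) + 3) ^ 3 / (18 * (n : ℝ) ^ 2)) := by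
  have ha : (2:ℝ) ≤ (n:ℝ) := by exact_mod_cast hn
  have ha0 : (0:ℝ) < (n:ℝ) := by linarith
  have hm : (0:ℝ) < (n:ℝ) + 3 := by linarith
  have hn0 : (n:ℝ) ≠ 0 := ne_of_gt ha0
  have hm0 : (n:ℝ) + 3 ≠ 0 := ne_of_gt hm
  have h := hs_aux (6 * (n:ℝ) / ((n:ℝ) + 3)) (3 * (n:ℝ) / ((n:ℝ) + 3))
      (2 * (n:ℝ) / ((n:ℝ) + 3)) (6 / ((n:ℝ) + 3))
      (((n:ℝ) + 3) ^ 3 / (18 * (n:ℝ) ^ 2))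
      (by positivity) (by positivity) (by positivity) (by positivity)
      (by field_simp; ring) (by field_simp; ring)
  have e1 : ∀ s : ℝ, -(6 * (n:ℝ) * s / ((n:ℝ) + 3)) = -((6 * (n:ℝ) / ((n:ℝ) + 3)) * s) :=
    fun s => by ring
  have e2 : ∀ s : ℝ, -(3 * (n:ℝ) * s / ((n:ℝ) + 3)) = -((3 * (n:ℝ) / ((n:ℝ) + 3)) * s) :=
    fun s => by ring
  have e3 : ∀ s : ℝ, -(2 * (n:ℝ) * s / ((n:ℝ) + 3)) = -((2 * (n:ℝ) / ((n:ℝ) + 3)) * s) :=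
    fun s => by ring
  have e4 : ∀ s : ℝ, -(6 * s / ((n:ℝ) + 3)) = -((6 / ((n:ℝ) + 3)) * s) :=
    fun s => by ring
  simp only [e1, e2, e3, e4]
  exact h
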